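/- If ρ is a separable density matrix indexed by (Fin m × Fin n), then both of its quantum conditional entropies are nonnegative: S(ρ) ≥ S(ρ^B) and S(ρ) ≥ S(ρ^A). Equivalently (contrapositive), every bipartite state with negative conditional entropy is entangled. -/

import Mathlib

open Matrix
open scoped Kronecker ComplexOrder

def IsDensityMatrix {n : Type*} [Fintype n] [DecidableEq n] (ρ : Matrix n n ℂ) : Prop :=
  ρ.PosSemidef ∧ ρ.trace = 1

/-- A bipartite density matrix is separable if it is a finite convex combination of
Kronecker products of density matrices. -/
def IsSeparableState {m n : ℕ} (ρ : Matrix (Fin m × Fin n) (Fin m × Fin n) ℂ) : Prop :=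
  ∃ (k : ℕ) (p : Fin k → ℝ) (σ : Fin k → Matrix (Fin m) (Fin m) ℂ)
    (τ : Fin k → Matrix (Fin n) (Fin n) ℂ),
    (∀ i, 0 ≤ p i) ∧ (∑ i, p i = 1) ∧
    (∀ i, IsDensityMatrix (σ i)) ∧ (∀ i, IsDensityMatrix (τ i)) ∧
    ρ = ∑ i, (p i : ℂ) • (σ i ⊗ₖ τ i)

open scoped Classical in
/-- The von Neumann entropy `S(ρ) = −Σᵢ λᵢ log λᵢ` (natural logarithm), where `λᵢ` are the
eigenvalues of the Hermitian matrix `ρ`; junk value `0` for non-Hermitian matrices. -/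
noncomputable def vnEntropy {n : Type*} [Fintype n] [DecidableEq n]
    (ρ : Matrix n n ℂ) : ℝ :=
  if h : ρ.IsHermitian then -∑ i, h.eigenvalues i * Real.log (h.eigenvalues i) else 0

/-- The reduced density matrix (partial trace over the second factor). -/
noncomputable def reducedA {m n : ℕ} (ρ : Matrix (Fin m × Fin n) (Fin m × Fin n) ℂ) :
    Matrix (Fin m) (Fin m) ℂ :=
  fun a b => ∑ e, ρ (a, e) (b, e)

/-- The reduced density matrix (partial trace over the first factor). -/
noncomputable def reducedB {m n : ℕ} (ρ : Matrix (Fin m × Fin n) (Fin m × Fin n) ℂ) :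
    Matrix (Fin n) (Fin n) ℂ :=
  fun e f => ∑ a, ρ (a, e) (a, f)

variable {ι : Type*} [Fintype ι] [DecidableEq ι]

/-- Matrix function via spectral decomposition. -/
noncomputable def mfun {A : Matrix ι ι ℂ} (hA : A.IsHermitian) (f : ℝ → ℝ) : Matrix ι ι ℂ :=
  (hA.eigenvectorUnitary : Matrix ι ι ℂ) *
    diagonal (fun i => (f (hA.eigenvalues i) : ℂ)) *
    (star hA.eigenvectorUnitary : Matrix ι ι ℂ)

section mfun
variable {A : Matrix ι ι ℂ} (hA : A.IsHermitian) (f g : ℝ → ℝ)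

lemma mfun_mul : mfun hA f * mfun hA g = mfun hA (fun x => f x * g x) := by
  have h1 : (star hA.eigenvectorUnitary : Matrix ι ι ℂ) *
      (hA.eigenvectorUnitary : Matrix ι ι ℂ) = 1 := by
    simpa using unitary.coe_star_mul_self hA.eigenvectorUnitary
  simp only [mfun, mul_assoc]
  rw [← mul_assoc (star hA.eigenvectorUnitary : Matrix ι ι ℂ), h1, one_mul,
    ← mul_assoc (diagonal _), diagonal_mul_diagonal]
  push_cast
  ring_nf

lemma mfun_congr (h : ∀ i, f (hA.eigenvalues i) = g (hA.eigenvalues i)) :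
    mfun hA f = mfun hA g := by
  unfold mfun
  congr 2
  exact congrArg _ (funext fun i => by rw [h i])

lemma mfun_id : mfun hA (fun x => x) = A := by
  rw [mfun]
  exact hA.spectral_theorem.symm

lemma mfun_add : mfun hA (fun x => f x + g x) = mfun hA f + mfun hA g := by
  simp only [mfun, Complex.ofReal_add, ← diagonal_add, mul_add, add_mul]

lemma mfun_const (c : ℝ) : mfun hA (fun _ => c) = (c : ℂ) • 1 := by
  have h2 : (hA.eigenvectorUnitary : Matrix ι ι ℂ) *
      (star hA.eigenvectorUnitary : Matrix ι ι ℂ) = 1 := by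
    simpa using unitary.coe_mul_star_self hA.eigenvectorUnitary
  rw [mfun]
  have hd : diagonal (fun _ : ι => (c : ℂ)) = (c : ℂ) • 1 := by
    ext i j
    by_cases h : i = j <;> simp [h, Matrix.diagonal, Matrix.one_apply]
  rw [hd, mul_smul_comm, smul_mul_assoc, mul_one, h2]

lemma mfun_isHermitian : (mfun hA f).IsHermitian := by
  unfold mfun Matrix.IsHermitian
  simp only [conjTranspose_mul, diagonal_conjTranspose, mul_assoc]
  rw [star_eq_conjTranspose, conjTranspose_conjTranspose]
  congr 2
  ext i j
  by_cases h : i = j <;> simp [Matrix.diagonal, h]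

end mfun

section mfun2
variable {A : Matrix ι ι ℂ} (hA : A.IsHermitian) (f g : ℝ → ℝ)

lemma mfun_posSemidef (h : ∀ i, 0 ≤ f (hA.eigenvalues i)) : (mfun hA f).PosSemidef := by
  unfold mfun
  rw [show (star hA.eigenvectorUnitary : Matrix ι ι ℂ) =
    (hA.eigenvectorUnitary : Matrix ι ι ℂ)ᴴ from rfl]
  refine Matrix.PosSemidef.mul_mul_conjTranspose_same ?_ _
  exact Matrix.posSemidef_diagonal_iff.mpr fun i => by
    simpa using Complex.zero_le_real.mpr (h i)

lemma trace_diagonal_mul (d : ι → ℂ) (M : Matrix ι ι ℂ) :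
    (diagonal d * M).trace = ∑ i, d i * M i i := by
  simp [Matrix.trace, Matrix.diag, Matrix.diagonal_mul]

lemma trace_mul_mfun (B : Matrix ι ι ℂ) :
    (B * mfun hA f).trace =
      ∑ i, (f (hA.eigenvalues i) : ℂ) *
        ((star hA.eigenvectorUnitary : Matrix ι ι ℂ) * B *
          (hA.eigenvectorUnitary : Matrix ι ι ℂ)) i i := by
  unfold mfun
  set U := (hA.eigenvectorUnitary : Matrix ι ι ℂ)
  set D := diagonal (fun i => (f (hA.eigenvalues i) : ℂ))
  rw [show B * (U * D * star U) = (B * U) * D * star U by noncomm_ring,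
    Matrix.trace_mul_cycle, Matrix.trace_mul_comm, trace_diagonal_mul]
  congr 1
  funext i
  rw [mul_assoc]

lemma trace_mfun_mul_mfun :
    (mfun hA f * mfun hA g).trace = ∑ i, ((f (hA.eigenvalues i) : ℂ) * (g (hA.eigenvalues i))) := by
  rw [mfun_mul]
  have h1 : (star hA.eigenvectorUnitary : Matrix ι ι ℂ) *
      (hA.eigenvectorUnitary : Matrix ι ι ℂ) = 1 := by
    simpa using unitary.coe_star_mul_self hA.eigenvectorUnitary
  unfold mfun
  rw [Matrix.trace_mul_comm, ← mul_assoc, h1, one_mul]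
  simp [Matrix.trace_diagonal]

end mfun2

section psd
variable {κ : Type*} [Fintype κ] [DecidableEq κ]

open scoped MatrixOrder in
lemma exists_eq_conjTranspose_mul_self_of_posSemidef {M : Matrix ι ι ℂ} (hM : M.PosSemidef) :
    ∃ B : Matrix ι ι ℂ, M = Bᴴ * B := by
  obtain ⟨B, rfl⟩ := CStarAlgebra.nonneg_iff_eq_star_mul_self.mp hM.nonneg
  exact ⟨B, rfl⟩

lemma trace_re_nonneg_of_posSemidef {M : Matrix ι ι ℂ} (hM : M.PosSemidef) :
    0 ≤ M.trace.re := by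
  have h : ∀ i, 0 ≤ (M i i).re := by
    intro i
    have := hM.re_dotProduct_nonneg (Pi.single i 1)
    simpa [dotProduct, Matrix.mulVec, Pi.single_apply] using this
  calc (0:ℝ) ≤ ∑ i, (M i i).re := Finset.sum_nonneg fun i _ => h i
  _ = M.trace.re := by simp [Matrix.trace, Matrix.diag, Complex.re_sum]

lemma trace_mul_re_nonneg {P Q : Matrix ι ι ℂ} (hP : P.PosSemidef) (hQ : Q.PosSemidef) :
    0 ≤ (P * Q).trace.re := by
  obtain ⟨B, rfl⟩ := exists_eq_conjTranspose_mul_self_of_posSemidef hP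
  rw [mul_assoc, Matrix.trace_mul_comm]
  exact trace_re_nonneg_of_posSemidef (hQ.mul_mul_conjTranspose_same B)

lemma posSemidef_smul_real {c : ℝ} (hc : 0 ≤ c) {M : Matrix ι ι ℂ} (hM : M.PosSemidef) :
    ((c : ℂ) • M).PosSemidef := by
  rw [Matrix.posSemidef_iff_dotProduct_mulVec]
  constructor
  · unfold Matrix.IsHermitian
    rw [Matrix.conjTranspose_smul, hM.1.eq]
    congr 1
    exact Complex.conj_ofReal c
  · intro x
    rw [Matrix.smul_mulVec, dotProduct_smul]
    exact smul_nonneg (Complex.zero_le_real.mpr hc) (hM.dotProduct_mulVec_nonneg x)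

lemma conjTranspose_kronecker (X : Matrix ι ι ℂ) (Y : Matrix κ κ ℂ) :
    (X ⊗ₖ Y)ᴴ = Xᴴ ⊗ₖ Yᴴ := by
  ext ⟨a, e⟩ ⟨b, f⟩
  simp [Matrix.conjTranspose_apply]

lemma posSemidef_kronecker {X : Matrix ι ι ℂ} {Y : Matrix κ κ ℂ}
    (hX : X.PosSemidef) (hY : Y.PosSemidef) : (X ⊗ₖ Y).PosSemidef := by
  obtain ⟨B, rfl⟩ := exists_eq_conjTranspose_mul_self_of_posSemidef hX
  obtain ⟨C, rfl⟩ := exists_eq_conjTranspose_mul_self_of_posSemidef hY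
  rw [show (Bᴴ * B) ⊗ₖ (Cᴴ * C) = (Bᴴ ⊗ₖ Cᴴ) * (B ⊗ₖ C) from Matrix.mul_kronecker_mul _ _ _ _, ← _root_.conjTranspose_kronecker]
  exact Matrix.posSemidef_conjTranspose_mul_self _

lemma sum_eigenvalues_eq_trace {M : Matrix ι ι ℂ} (hM : M.IsHermitian) :
    (↑(∑ i, hM.eigenvalues i) : ℂ) = M.trace := by
  have := trace_mfun_mul_mfun hM (fun x => x) (fun _ => 1)
  rw [mfun_id, mfun_const] at this
  simp only [mul_one, Complex.ofReal_one, one_smul] at this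
  push_cast
  simpa using this.symm

/-- `1 - σ` is PSD for a density matrix `σ`. -/
lemma one_sub_posSemidef {M : Matrix ι ι ℂ} (hM : M.PosSemidef) (htr : M.trace = 1) :
    ((1 : Matrix ι ι ℂ) - M).PosSemidef := by
  have hsum : ∑ i, hM.1.eigenvalues i = 1 := by
    have := sum_eigenvalues_eq_trace hM.1
    rw [htr] at this
    exact_mod_cast this
  have h1 : (1 : Matrix ι ι ℂ) - M = mfun hM.1 (fun x => 1 - x) := by
    have := mfun_add hM.1 (fun x => 1 - x) (fun x => x)
    simp only [sub_add_cancel] at this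
    rw [mfun_id, mfun_const] at this
    simp only [Complex.ofReal_one, one_smul] at this
    rw [eq_sub_iff_add_eq.mpr this.symm]
  rw [h1]
  apply mfun_posSemidef
  intro i
  have hle : hM.1.eigenvalues i ≤ 1 := by
    rw [← hsum]
    exact Finset.single_le_sum (fun j _ => hM.eigenvalues_nonneg j) (Finset.mem_univ i)
  linarith

/-- Monotonicity of the square root: if `S² = A ≤ B = T²` with `S, T` PSD then `S ≤ T`. -/
lemma sub_posSemidef_of_sq {A B S T : Matrix ι ι ℂ} (hS : S.PosSemidef) (hT : T.PosSemidef)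
    (hS2 : S ^ 2 = A) (hT2 : T ^ 2 = B) (hBA : (B - A).PosSemidef) :
    (T - S).PosSemidef := by
  by_contra hcon
  have hTS : (T - S).IsHermitian := hT.1.sub hS.1
  have : ∃ i, hTS.eigenvalues i < 0 := by
    by_contra hall
    push_neg at hall
    exact hcon (hTS.posSemidef_iff_eigenvalues_nonneg.mpr hall)
  obtain ⟨i, hi⟩ := this
  set t : ℝ := hTS.eigenvalues i
  set v : ι → ℂ := ⇑(hTS.eigenvectorBasis i)
  have hv' : (T - S) *ᵥ v = (t : ℂ) • v := by
    have h2 := hTS.mulVec_eigenvectorBasis i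
    rw [h2]
    funext j
    simp [v, t, Complex.real_smul]
  have hvne : v ≠ 0 := by
    intro h0
    have := (hTS.eigenvectorBasis).orthonormal.ne_zero i
    apply this
    ext j
    exact congrFun h0 j
  have h_sum : (0:ℂ) ≤ (t:ℂ) * (star v ⬝ᵥ T *ᵥ v + star v ⬝ᵥ S *ᵥ v) := calc
    (0:ℂ) ≤ star v ⬝ᵥ (B - A) *ᵥ v := hBA.dotProduct_mulVec_nonneg v
    _ = star v ⬝ᵥ T *ᵥ (T - S) *ᵥ v + star v ⬝ᵥ (T - S) *ᵥ S *ᵥ v := by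
      rw [← hS2, ← hT2, mulVec_mulVec, mulVec_mulVec, ← dotProduct_add, ← add_mulVec,
        mul_sub, sub_mul, add_sub, sub_add_cancel, pow_two, pow_two]
    _ = (t:ℂ) * (star v ⬝ᵥ T *ᵥ v) + star v ᵥ* (T - S)ᴴ ⬝ᵥ S *ᵥ v := by
      rw [hv', mulVec_smul, dotProduct_smul, smul_eq_mul, dotProduct_mulVec _ (T - S), hTS]
    _ = (t:ℂ) * (star v ⬝ᵥ T *ᵥ v + star v ⬝ᵥ S *ᵥ v) := by
      rw [← star_mulVec, hv', mul_add]
      congr 1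
      rw [star_smul, smul_dotProduct]
      simp [Complex.conj_ofReal]
  have hT0 : (0:ℂ) ≤ star v ⬝ᵥ T *ᵥ v := hT.dotProduct_mulVec_nonneg v
  have hS0 : (0:ℂ) ≤ star v ⬝ᵥ S *ᵥ v := hS.dotProduct_mulVec_nonneg v
  have hTv : star v ⬝ᵥ T *ᵥ v = 0 ∧ star v ⬝ᵥ S *ᵥ v = 0 := by
    by_contra hne
    have hpos : (0:ℂ) < star v ⬝ᵥ T *ᵥ v + star v ⬝ᵥ S *ᵥ v := by
      rcases lt_or_eq_of_le hT0 with h | h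
      · exact lt_add_of_pos_of_le h hS0
      rcases lt_or_eq_of_le hS0 with h' | h'
      · exact lt_add_of_le_of_pos hT0 h'
      exact absurd ⟨h.symm, h'.symm⟩ hne
    have : (t:ℂ) * (star v ⬝ᵥ T *ᵥ v + star v ⬝ᵥ S *ᵥ v) < 0 := by
      apply mul_neg_of_neg_of_pos _ hpos
      exact_mod_cast hi
    exact absurd (lt_of_le_of_lt h_sum this) (lt_irrefl 0)
  have hTv0 : T *ᵥ v = 0 := (hT.dotProduct_mulVec_zero_iff v).mp hTv.1
  have hSv0 : S *ᵥ v = 0 := (hS.dotProduct_mulVec_zero_iff v).mp hTv.2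
  have : (t : ℂ) • v = 0 := by
    rw [← hv', sub_mulVec, hTv0, hSv0, sub_zero]
  have ht0 : (t:ℂ) ≠ 0 := by
    exact_mod_cast Complex.ofReal_ne_zero.mpr (ne_of_lt hi)
  rcases smul_eq_zero.mp this with h | h
  · exact absurd h ht0
  · exact hvne h

end psd

section limits
open Filter Real Topology

lemma tendsto_pow_half_mul_rpow {y : ℝ} (hy : 0 < y) :
    Tendsto (fun k : ℕ => (2:ℝ)^k * (y ^ ((1/2:ℝ)^k) - 1)) atTop (𝓝 (Real.log y)) := by
  have hderiv : HasDerivAt (fun a : ℝ => Real.exp (Real.log y * a)) (Real.log y) 0 := by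
    have h1 : HasDerivAt (fun a : ℝ => Real.log y * a) (Real.log y) 0 := by
      simpa using (hasDerivAt_id (0:ℝ)).const_mul (Real.log y)
    have := (Real.hasDerivAt_exp (Real.log y * 0)).comp 0 h1
    simpa [Function.comp_def] using this
  have hslope := hasDerivAt_iff_tendsto_slope.mp hderiv
  have hseq : Tendsto (fun k : ℕ => ((1:ℝ)/2)^k) atTop (𝓝[≠] 0) := by
    apply tendsto_nhdsWithin_of_tendsto_nhds_of_eventually_within
    · exact tendsto_pow_atTop_nhds_zero_of_lt_one (by norm_num) (by norm_num)
    · exact Eventually.of_forall fun k => by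
        simp only [Set.mem_compl_iff, Set.mem_singleton_iff]
        positivity
  have hcomp := hslope.comp hseq
  have heq : (slope (fun a : ℝ => Real.exp (Real.log y * a)) 0 ∘ fun k : ℕ => ((1:ℝ)/2)^k)
      = fun k : ℕ => (2:ℝ)^k * (y ^ ((1/2:ℝ)^k) - 1) := by
    funext k
    have hne : ((1:ℝ)/2)^k ≠ 0 := by positivity
    have hy' : y ^ ((1/2:ℝ)^k) = Real.exp (Real.log y * (1/2:ℝ)^k) := by
      rw [Real.rpow_def_of_pos hy]
    rw [Function.comp_apply, slope_def_field, sub_zero, hy', mul_zero, Real.exp_zero,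
      div_eq_mul_inv, show (((1:ℝ)/2)^k)⁻¹ = (2:ℝ)^k by rw [one_div, inv_pow, inv_inv],
      mul_comm]
  rw [heq] at hcomp
  exact hcomp

end limits

section core
open Filter Real Topology

lemma tendsto_mul_log_add {l : ℝ} (hl : 0 ≤ l) :
    Tendsto (fun ε : ℝ => l * Real.log (l + ε)) (𝓝[>] 0) (𝓝 (l * Real.log l)) := by
  rcases eq_or_lt_of_le hl with h | h
  · simp only [← h, zero_mul]
    exact tendsto_const_nhds
  · have hc : ContinuousAt (fun ε : ℝ => l * Real.log (l + ε)) 0 := by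
      apply ContinuousAt.mul continuousAt_const
      have h1 : ContinuousAt (fun ε : ℝ => l + ε) 0 := by fun_prop
      have h2 : ContinuousAt Real.log (l + 0) := Real.continuousAt_log (by linarith)
      exact h2.comp h1
    have h3 : Tendsto (fun ε : ℝ => l * Real.log (l + ε)) (𝓝 0) (𝓝 (l * Real.log l)) := by
      simpa using hc.tendsto
    exact h3.mono_left nhdsWithin_le_nhds

lemma sum_expand {α : Type*} [Fintype α] (c g : α → ℝ) (t : ℝ) :
    ∑ x, c x * (t * (g x - 1)) = t * ((∑ x, c x * g x) - ∑ x, c x) := by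
  calc ∑ x, c x * (t * (g x - 1)) = ∑ x, (t * (c x * g x) - t * c x) :=
        Finset.sum_congr rfl fun x _ => by ring
  _ = t * (∑ x, c x * g x) - t * ∑ x, c x := by
        rw [Finset.sum_sub_distrib, ← Finset.mul_sum, ← Finset.mul_sum]
  _ = t * ((∑ x, c x * g x) - ∑ x, c x) := by ring

lemma chain_core {κ : Type*} [Fintype κ]
    {ρ : Matrix ι ι ℂ} (hρ : ρ.PosSemidef) {ε : ℝ} (hε : 0 < ε)
    (Q : ℕ → Matrix ι ι ℂ) (hQpsd : ∀ k, (Q k).PosSemidef)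
    (hQsq : ∀ k, (Q (k+1)) ^ 2 = Q k)
    (hQ0 : (Q 0 - (ρ + (ε:ℂ) • 1)).PosSemidef)
    (μ : κ → ℝ) (hμ : ∀ j, 0 ≤ μ j)
    (htr : ∀ k, (ρ * Q k).trace = ↑(∑ j, μ j * ((μ j + ε) ^ ((1/2:ℝ)^k))))
    (htrρ : ρ.trace = ↑(∑ j, μ j)) :
    ∑ i, hρ.1.eigenvalues i * Real.log (hρ.1.eigenvalues i + ε)
      ≤ ∑ j, μ j * Real.log (μ j + ε) := by
  set lam := hρ.1.eigenvalues with hlam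
  have hlamnn : ∀ i, 0 ≤ lam i := fun i => hρ.eigenvalues_nonneg i
  set f : ℕ → ℝ → ℝ := fun k x => (x + ε) ^ ((1/2:ℝ)^k) with hf
  set A : ℕ → Matrix ι ι ℂ := fun k => mfun hρ.1 (f k) with hA
  have hApsd : ∀ k, (A k).PosSemidef := fun k =>
    mfun_posSemidef hρ.1 (f k) fun i => Real.rpow_nonneg (by linarith [hlamnn i]) _
  have hAsq : ∀ k, (A (k+1)) ^ 2 = A k := by
    intro k
    rw [hA, pow_two, mfun_mul]
    apply mfun_congr
    intro i
    have hpos : 0 < lam i + ε := by linarith [hlamnn i]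
    simp only [hf]
    rw [← Real.rpow_add hpos]
    congr 1
    rw [pow_succ]
    ring
  have hA0 : A 0 = ρ + (ε:ℂ) • 1 := by
    show mfun hρ.1 (f 0) = ρ + (ε:ℂ) • 1
    have h1 : mfun hρ.1 (f 0) = mfun hρ.1 (fun x => x + ε) := by
      apply mfun_congr
      intro i
      simp only [hf, pow_zero, Real.rpow_one]
    rw [h1, mfun_add hρ.1 (fun x => x) (fun _ => ε), mfun_id, mfun_const]
  have chain : ∀ k, (Q k - A k).PosSemidef := by
    intro k
    induction k with
    | zero => rw [hA0]; exact hQ0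
    | succ k ih => exact sub_posSemidef_of_sq (hApsd (k+1)) (hQpsd (k+1)) (hAsq k) (hQsq k) ih
  have htrA : ∀ k, (ρ * A k).trace = ↑(∑ i, lam i * f k (lam i)) := by
    intro k
    conv_lhs => rw [← mfun_id hρ.1]
    rw [trace_mfun_mul_mfun]
    push_cast
    rfl
  have hsums : ∑ i, lam i = ∑ j, μ j := by
    have h1 := sum_eigenvalues_eq_trace hρ.1
    rw [htrρ] at h1
    exact_mod_cast h1
  have ineq : ∀ k, ∑ i, lam i * f k (lam i) ≤ ∑ j, μ j * f k (μ j) := by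
    intro k
    have h0 := trace_mul_re_nonneg hρ (chain k)
    rw [mul_sub, Matrix.trace_sub, htr k, htrA k] at h0
    simp only [Complex.sub_re, Complex.ofReal_re] at h0
    simp only [hf] at h0 ⊢
    linarith
  have ineq' : ∀ k : ℕ, ∑ i, lam i * ((2:ℝ)^k * (f k (lam i) - 1))
      ≤ ∑ j, μ j * ((2:ℝ)^k * (f k (μ j) - 1)) := by
    intro k
    rw [sum_expand, sum_expand, hsums]
    have h2 : (0:ℝ) ≤ (2:ℝ)^k := by positivity
    apply mul_le_mul_of_nonneg_left _ h2
    exact sub_le_sub_right (ineq k) _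
  have hL : Tendsto (fun k : ℕ => ∑ i, lam i * ((2:ℝ)^k * (f k (lam i) - 1))) atTop
      (𝓝 (∑ i, lam i * Real.log (lam i + ε))) := by
    apply tendsto_finset_sum
    intro i _
    exact (tendsto_pow_half_mul_rpow (by linarith [hlamnn i])).const_mul _
  have hR : Tendsto (fun k : ℕ => ∑ j, μ j * ((2:ℝ)^k * (f k (μ j) - 1))) atTop
      (𝓝 (∑ j, μ j * Real.log (μ j + ε))) := by
    apply tendsto_finset_sum
    intro j _
    exact (tendsto_pow_half_mul_rpow (by linarith [hμ j])).const_mul _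
  exact le_of_tendsto_of_tendsto' hL hR ineq'

end core

section wrap
open Filter Topology

lemma sum_log_le_of_forall_eps {α β : Type*} [Fintype α] [Fintype β]
    (lam : α → ℝ) (μ : β → ℝ) (hl : ∀ i, 0 ≤ lam i) (hm : ∀ j, 0 ≤ μ j)
    (h : ∀ ε : ℝ, 0 < ε →
      ∑ i, lam i * Real.log (lam i + ε) ≤ ∑ j, μ j * Real.log (μ j + ε)) :
    ∑ i, lam i * Real.log (lam i) ≤ ∑ j, μ j * Real.log (μ j) := by
  have hL : Tendsto (fun ε : ℝ => ∑ i, lam i * Real.log (lam i + ε)) (𝓝[>] 0)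
      (𝓝 (∑ i, lam i * Real.log (lam i))) :=
    tendsto_finset_sum _ fun i _ => tendsto_mul_log_add (hl i)
  have hR : Tendsto (fun ε : ℝ => ∑ j, μ j * Real.log (μ j + ε)) (𝓝[>] 0)
      (𝓝 (∑ j, μ j * Real.log (μ j))) :=
    tendsto_finset_sum _ fun j _ => tendsto_mul_log_add (hm j)
  refine le_of_tendsto_of_tendsto hL hR ?_
  exact eventually_mem_nhdsWithin.mono fun x hx => h x hx

end wrap


section reduced
variable {m n : ℕ} {ρ : Matrix (Fin m × Fin n) (Fin m × Fin n) ℂ}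

lemma reducedB_isHermitian (hρ : ρ.IsHermitian) : (reducedB ρ).IsHermitian := by
  ext e f
  simp only [Matrix.conjTranspose_apply, reducedB, star_sum]
  refine Finset.sum_congr rfl fun a _ => ?_
  rw [← Matrix.conjTranspose_apply, hρ.eq]

lemma reducedA_isHermitian (hρ : ρ.IsHermitian) : (reducedA ρ).IsHermitian := by
  ext a b
  simp only [Matrix.conjTranspose_apply, reducedA, star_sum]
  refine Finset.sum_congr rfl fun e _ => ?_
  rw [← Matrix.conjTranspose_apply, hρ.eq]

lemma reducedB_posSemidef (hρ : ρ.PosSemidef) : (reducedB ρ).PosSemidef := by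
  refine Matrix.posSemidef_iff_dotProduct_mulVec.mpr ⟨reducedB_isHermitian hρ.1, fun x => ?_⟩
  classical
  have term : ∀ a : Fin m, star (fun p : Fin m × Fin n => if p.1 = a then x p.2 else 0) ⬝ᵥ
      ρ *ᵥ (fun p : Fin m × Fin n => if p.1 = a then x p.2 else 0)
      = ∑ e, ∑ f, star (x e) * (ρ (a,e) (a,f) * x f) := by
    intro a
    simp only [dotProduct, Matrix.mulVec, Pi.star_apply, Fintype.sum_prod_type,
      apply_ite, star_zero, ite_mul, zero_mul, mul_ite, mul_zero]
    rw [Finset.sum_comm]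
    simp only [Finset.sum_ite_eq', Finset.mem_univ, if_true]
    refine Finset.sum_congr rfl fun e _ => ?_
    rw [Finset.sum_comm]
    simp only [Finset.sum_ite_eq', Finset.mem_univ, if_true, Finset.mul_sum]
  have key : star x ⬝ᵥ (reducedB ρ) *ᵥ x
      = ∑ a, ∑ e, ∑ f, star (x e) * (ρ (a,e) (a,f) * x f) := by
    calc star x ⬝ᵥ (reducedB ρ) *ᵥ x
        = ∑ e, ∑ f, ∑ a, star (x e) * (ρ (a,e) (a,f) * x f) := by
          simp only [dotProduct, Matrix.mulVec, reducedB, Pi.star_apply,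
            Finset.sum_mul, Finset.mul_sum]
      _ = ∑ a, ∑ e, ∑ f, star (x e) * (ρ (a,e) (a,f) * x f) :=
          (Finset.sum_congr rfl fun e _ => Finset.sum_comm).trans (Finset.sum_comm)
  rw [key]
  refine Finset.sum_nonneg fun a _ => ?_
  rw [← term a]
  exact hρ.dotProduct_mulVec_nonneg _

lemma trace_mul_one_kron (K : Matrix (Fin n) (Fin n) ℂ) :
    (ρ * ((1 : Matrix (Fin m) (Fin m) ℂ) ⊗ₖ K)).trace = ((reducedB ρ) * K).trace := by
  classical
  calc (ρ * ((1 : Matrix (Fin m) (Fin m) ℂ) ⊗ₖ K)).trace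
      = ∑ a, ∑ e, ∑ f, ρ (a,e) (a,f) * K f e := by
        simp only [Matrix.trace, Matrix.diag, Matrix.mul_apply, Fintype.sum_prod_type,
          Matrix.kroneckerMap_apply, Matrix.one_apply, ite_mul, one_mul, zero_mul,
          mul_ite, mul_zero]
        refine Finset.sum_congr rfl fun a _ => Finset.sum_congr rfl fun e _ => ?_
        rw [Finset.sum_comm]
        simp only [Finset.sum_ite_eq', Finset.mem_univ, if_true]
    _ = ∑ e, ∑ f, ∑ a, ρ (a,e) (a,f) * K f e :=
        (Finset.sum_comm).trans (Finset.sum_congr rfl fun e _ => Finset.sum_comm)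
    _ = ((reducedB ρ) * K).trace := by
        simp only [Matrix.trace, Matrix.diag, Matrix.mul_apply, reducedB, Finset.sum_mul]

lemma reducedA_posSemidef (hρ : ρ.PosSemidef) : (reducedA ρ).PosSemidef := by
  refine Matrix.posSemidef_iff_dotProduct_mulVec.mpr ⟨reducedA_isHermitian hρ.1, fun x => ?_⟩
  classical
  have term : ∀ e : Fin n, star (fun p : Fin m × Fin n => if p.2 = e then x p.1 else 0) ⬝ᵥ
      ρ *ᵥ (fun p : Fin m × Fin n => if p.2 = e then x p.1 else 0)
      = ∑ a, ∑ b, star (x a) * (ρ (a,e) (b,e) * x b) := by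
    intro e
    simp only [dotProduct, Matrix.mulVec, Pi.star_apply, Fintype.sum_prod_type,
      apply_ite, star_zero, ite_mul, zero_mul, mul_ite, mul_zero]
    simp only [Finset.sum_ite_eq', Finset.mem_univ, if_true, Finset.mul_sum]
  have key : star x ⬝ᵥ (reducedA ρ) *ᵥ x
      = ∑ e, ∑ a, ∑ b, star (x a) * (ρ (a,e) (b,e) * x b) := by
    calc star x ⬝ᵥ (reducedA ρ) *ᵥ x
        = ∑ a, ∑ b, ∑ e, star (x a) * (ρ (a,e) (b,e) * x b) := by
          simp only [dotProduct, Matrix.mulVec, reducedA, Pi.star_apply,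
            Finset.sum_mul, Finset.mul_sum]
      _ = ∑ e, ∑ a, ∑ b, star (x a) * (ρ (a,e) (b,e) * x b) :=
          (Finset.sum_congr rfl fun a _ => Finset.sum_comm).trans Finset.sum_comm
  rw [key]
  refine Finset.sum_nonneg fun e _ => ?_
  rw [← term e]
  exact hρ.dotProduct_mulVec_nonneg _

lemma trace_mul_kron_one (K : Matrix (Fin m) (Fin m) ℂ) :
    (ρ * (K ⊗ₖ (1 : Matrix (Fin n) (Fin n) ℂ))).trace = ((reducedA ρ) * K).trace := by
  classical
  calc (ρ * (K ⊗ₖ (1 : Matrix (Fin n) (Fin n) ℂ))).trace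
      = ∑ a, ∑ e, ∑ b, ρ (a,e) (b,e) * K b a := by
        simp only [Matrix.trace, Matrix.diag, Matrix.mul_apply, Fintype.sum_prod_type,
          Matrix.kroneckerMap_apply, Matrix.one_apply, mul_ite, mul_zero, mul_one]
        simp only [Finset.sum_ite_eq', Finset.mem_univ, if_true]
    _ = ∑ a, ∑ b, ∑ e, ρ (a,e) (b,e) * K b a :=
        Finset.sum_congr rfl fun a _ => Finset.sum_comm
    _ = ((reducedA ρ) * K).trace := by
        simp only [Matrix.trace, Matrix.diag, Matrix.mul_apply, reducedA, Finset.sum_mul]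

lemma trace_reducedB : (reducedB ρ).trace = ρ.trace := by
  simp only [Matrix.trace, Matrix.diag, reducedB, Fintype.sum_prod_type]
  exact Finset.sum_comm

lemma trace_reducedA : (reducedA ρ).trace = ρ.trace := by
  simp only [Matrix.trace, Matrix.diag, reducedA, Fintype.sum_prod_type]

end reduced

section separable
open scoped Kronecker
variable {m n : ℕ} {k : ℕ} {p : Fin k → ℝ} {σ : Fin k → Matrix (Fin m) (Fin m) ℂ}
  {τ : Fin k → Matrix (Fin n) (Fin n) ℂ}

lemma posSemidef_sum {α : Type*} [Fintype α] (M : α → Matrix ι ι ℂ)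
    (h : ∀ i, (M i).PosSemidef) : (∑ i, M i).PosSemidef := by
  classical
  refine Finset.sum_induction M Matrix.PosSemidef (fun a b ha hb => ha.add hb)
    Matrix.PosSemidef.zero (fun i _ => h i)

lemma sep_reducedB (hσ : ∀ i, (σ i).trace = 1) :
    reducedB (∑ i, (p i : ℂ) • (σ i ⊗ₖ τ i)) = ∑ i, (p i : ℂ) • τ i := by
  ext e f
  simp only [reducedB, Matrix.sum_apply, Matrix.smul_apply, Matrix.kroneckerMap_apply,
    smul_eq_mul]
  rw [Finset.sum_comm]
  refine Finset.sum_congr rfl fun i _ => ?_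
  have h1 : ∑ a, (p i : ℂ) * (σ i a a * τ i e f) = (p i : ℂ) * ((σ i).trace * τ i e f) := by
    rw [Matrix.trace, Finset.sum_mul, Finset.mul_sum]
    exact Finset.sum_congr rfl fun a _ => by simp only [Matrix.diag]
  rw [h1, hσ i, one_mul]

lemma sep_reducedA (hτ : ∀ i, (τ i).trace = 1) :
    reducedA (∑ i, (p i : ℂ) • (σ i ⊗ₖ τ i)) = ∑ i, (p i : ℂ) • σ i := by
  ext a b
  simp only [reducedA, Matrix.sum_apply, Matrix.smul_apply, Matrix.kroneckerMap_apply,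
    smul_eq_mul]
  rw [Finset.sum_comm]
  refine Finset.sum_congr rfl fun i _ => ?_
  have h1 : ∑ e, (p i : ℂ) * (σ i a b * τ i e e) = (p i : ℂ) * (σ i a b * (τ i).trace) := by
    rw [Matrix.trace, Finset.mul_sum, Finset.mul_sum]
    exact Finset.sum_congr rfl fun e _ => by simp only [Matrix.diag]
  rw [h1, hτ i, mul_one]

lemma sep_reduction_B (hp : ∀ i, 0 ≤ p i) (hσ : ∀ i, IsDensityMatrix (σ i))
    (hτ : ∀ i, IsDensityMatrix (τ i)) :
    ((1 : Matrix (Fin m) (Fin m) ℂ) ⊗ₖ reducedB (∑ i, (p i : ℂ) • (σ i ⊗ₖ τ i))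
      - ∑ i, (p i : ℂ) • (σ i ⊗ₖ τ i)).PosSemidef := by
  rw [sep_reducedB (fun i => (hσ i).2)]
  have key : (1 : Matrix (Fin m) (Fin m) ℂ) ⊗ₖ (∑ i, (p i : ℂ) • τ i)
      - ∑ i, (p i : ℂ) • (σ i ⊗ₖ τ i)
      = ∑ i, (p i : ℂ) • (((1 : Matrix (Fin m) (Fin m) ℂ) - σ i) ⊗ₖ τ i) := by
    ext ⟨a, e⟩ ⟨b, f⟩
    simp only [Matrix.sub_apply, Matrix.sum_apply, Matrix.smul_apply,
      Matrix.kroneckerMap_apply, Matrix.one_apply, smul_eq_mul, sub_mul, mul_sub,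
      ite_mul, one_mul, zero_mul, Finset.sum_sub_distrib]
    by_cases h : a = b <;> simp [h, Finset.sum_sub_distrib]
  rw [key]
  refine posSemidef_sum _ fun i => posSemidef_smul_real (hp i) ?_
  exact posSemidef_kronecker (one_sub_posSemidef (hσ i).1 (hσ i).2) (hτ i).1

lemma sep_reduction_A (hp : ∀ i, 0 ≤ p i) (hσ : ∀ i, IsDensityMatrix (σ i))
    (hτ : ∀ i, IsDensityMatrix (τ i)) :
    (reducedA (∑ i, (p i : ℂ) • (σ i ⊗ₖ τ i)) ⊗ₖ (1 : Matrix (Fin n) (Fin n) ℂ)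
      - ∑ i, (p i : ℂ) • (σ i ⊗ₖ τ i)).PosSemidef := by
  rw [sep_reducedA (fun i => (hτ i).2)]
  have key : (∑ i, (p i : ℂ) • σ i) ⊗ₖ (1 : Matrix (Fin n) (Fin n) ℂ)
      - ∑ i, (p i : ℂ) • (σ i ⊗ₖ τ i)
      = ∑ i, (p i : ℂ) • (σ i ⊗ₖ ((1 : Matrix (Fin n) (Fin n) ℂ) - τ i)) := by
    ext ⟨a, e⟩ ⟨b, f⟩
    simp only [Matrix.sub_apply, Matrix.sum_apply, Matrix.smul_apply,
      Matrix.kroneckerMap_apply, Matrix.one_apply, smul_eq_mul, sub_mul, mul_sub,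
      mul_ite, mul_one, mul_zero, Finset.sum_sub_distrib]
    by_cases h : e = f <;> simp [h, Finset.sum_sub_distrib]
  rw [key]
  refine posSemidef_sum _ fun i => posSemidef_smul_real (hp i) ?_
  exact posSemidef_kronecker (hσ i).1 (one_sub_posSemidef (hτ i).1 (hτ i).2)

end separable

section main
variable {m n : ℕ}

lemma half_B {ρ : Matrix (Fin m × Fin n) (Fin m × Fin n) ℂ} (hρ : ρ.PosSemidef)
    (hred : ((1 : Matrix (Fin m) (Fin m) ℂ) ⊗ₖ reducedB ρ - ρ).PosSemidef) :
    vnEntropy (reducedB ρ) ≤ vnEntropy ρ := by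
  have hB : (reducedB ρ).PosSemidef := reducedB_posSemidef hρ
  simp only [vnEntropy, dif_pos hρ.1, dif_pos hB.1]
  apply neg_le_neg
  apply sum_log_le_of_forall_eps _ _ (fun i => hρ.eigenvalues_nonneg i)
    (fun j => hB.eigenvalues_nonneg j)
  intro ε hε
  refine chain_core hρ hε
    (fun k => (1 : Matrix (Fin m) (Fin m) ℂ) ⊗ₖ mfun hB.1 (fun x => (x + ε) ^ ((1/2:ℝ)^k)))
    (fun k => posSemidef_kronecker Matrix.PosSemidef.one
      (mfun_posSemidef hB.1 _ fun j => Real.rpow_nonneg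
        (by linarith [hB.eigenvalues_nonneg j]) _))
    (fun k => ?_) ?_ hB.1.eigenvalues (fun j => hB.eigenvalues_nonneg j) (fun k => ?_) ?_
  · beta_reduce
    rw [pow_two, ← Matrix.mul_kronecker_mul, one_mul, mfun_mul]
    refine congrArg (fun M => (1 : Matrix (Fin m) (Fin m) ℂ) ⊗ₖ M)
      (mfun_congr hB.1 _ _ fun j => ?_)
    have hpos : 0 < hB.1.eigenvalues j + ε := by linarith [hB.eigenvalues_nonneg j]
    rw [← Real.rpow_add hpos]
    congr 1
    rw [pow_succ]
    ring
  · beta_reduce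
    have h0 : mfun hB.1 (fun x => (x + ε) ^ ((1/2:ℝ)^0)) = reducedB ρ + (ε:ℂ) • 1 := by
      have h1 : mfun hB.1 (fun x => (x + ε) ^ ((1/2:ℝ)^0)) = mfun hB.1 (fun x => x + ε) := by
        apply mfun_congr
        intro j
        simp [Real.rpow_one]
      rw [h1, mfun_add hB.1 (fun x => x) (fun _ => ε), mfun_id, mfun_const]
    rw [h0, Matrix.kronecker_add, Matrix.kronecker_smul, Matrix.one_kronecker_one]
    have h2 : (1 : Matrix (Fin m) (Fin m) ℂ) ⊗ₖ reducedB ρ + (ε:ℂ) • 1 - (ρ + (ε:ℂ) • 1)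
        = (1 : Matrix (Fin m) (Fin m) ℂ) ⊗ₖ reducedB ρ - ρ := by abel
    rw [h2]
    exact hred
  · beta_reduce
    rw [trace_mul_one_kron]
    have h3 := trace_mfun_mul_mfun hB.1 (fun x => x) (fun x => (x + ε) ^ ((1/2:ℝ)^k))
    rw [mfun_id] at h3
    rw [h3]
    push_cast
    rfl
  · rw [← trace_reducedB, ← sum_eigenvalues_eq_trace hB.1]

lemma half_A {ρ : Matrix (Fin m × Fin n) (Fin m × Fin n) ℂ} (hρ : ρ.PosSemidef)
    (hred : (reducedA ρ ⊗ₖ (1 : Matrix (Fin n) (Fin n) ℂ) - ρ).PosSemidef) :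
    vnEntropy (reducedA ρ) ≤ vnEntropy ρ := by
  have hB : (reducedA ρ).PosSemidef := reducedA_posSemidef hρ
  simp only [vnEntropy, dif_pos hρ.1, dif_pos hB.1]
  apply neg_le_neg
  apply sum_log_le_of_forall_eps _ _ (fun i => hρ.eigenvalues_nonneg i)
    (fun j => hB.eigenvalues_nonneg j)
  intro ε hε
  refine chain_core hρ hε
    (fun k => mfun hB.1 (fun x => (x + ε) ^ ((1/2:ℝ)^k)) ⊗ₖ (1 : Matrix (Fin n) (Fin n) ℂ))
    (fun k => posSemidef_kronecker
      (mfun_posSemidef hB.1 _ fun j => Real.rpow_nonneg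
        (by linarith [hB.eigenvalues_nonneg j]) _) Matrix.PosSemidef.one)
    (fun k => ?_) ?_ hB.1.eigenvalues (fun j => hB.eigenvalues_nonneg j) (fun k => ?_) ?_
  · beta_reduce
    rw [pow_two, ← Matrix.mul_kronecker_mul, one_mul, mfun_mul]
    refine congrArg (fun M => M ⊗ₖ (1 : Matrix (Fin n) (Fin n) ℂ))
      (mfun_congr hB.1 _ _ fun j => ?_)
    have hpos : 0 < hB.1.eigenvalues j + ε := by linarith [hB.eigenvalues_nonneg j]
    rw [← Real.rpow_add hpos]
    congr 1
    rw [pow_succ]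
    ring
  · beta_reduce
    have h0 : mfun hB.1 (fun x => (x + ε) ^ ((1/2:ℝ)^0)) = reducedA ρ + (ε:ℂ) • 1 := by
      have h1 : mfun hB.1 (fun x => (x + ε) ^ ((1/2:ℝ)^0)) = mfun hB.1 (fun x => x + ε) := by
        apply mfun_congr
        intro j
        simp [Real.rpow_one]
      rw [h1, mfun_add hB.1 (fun x => x) (fun _ => ε), mfun_id, mfun_const]
    rw [h0, Matrix.add_kronecker, Matrix.smul_kronecker, Matrix.one_kronecker_one]
    have h2 : reducedA ρ ⊗ₖ (1 : Matrix (Fin n) (Fin n) ℂ) + (ε:ℂ) • 1 - (ρ + (ε:ℂ) • 1)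
        = reducedA ρ ⊗ₖ (1 : Matrix (Fin n) (Fin n) ℂ) - ρ := by abel
    rw [h2]
    exact hred
  · beta_reduce
    rw [trace_mul_kron_one]
    have h3 := trace_mfun_mul_mfun hB.1 (fun x => x) (fun x => (x + ε) ^ ((1/2:ℝ)^k))
    rw [mfun_id] at h3
    rw [h3]
    push_cast
    rfl
  · rw [← trace_reducedA, ← sum_eigenvalues_eq_trace hB.1]

end main

theorem separable_nonneg_conditional_entropy {m n : ℕ}
    (ρ : Matrix (Fin m × Fin n) (Fin m × Fin n) ℂ)
    (hρ : IsDensityMatrix ρ) (hsep : IsSeparableState ρ) :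
    vnEntropy (reducedB ρ) ≤ vnEntropy ρ ∧ vnEntropy (reducedA ρ) ≤ vnEntropy ρ := by
  obtain ⟨hpsd, htr⟩ := hρ
  obtain ⟨k, p, σ, τ, hp, hpsum, hσ, hτ, rfl⟩ := hsep
  exact ⟨half_B hpsd (sep_reduction_B hp hσ hτ), half_A hpsd (sep_reduction_A hp hσ hτ)⟩
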